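/- Let d ≥ 2 and N ≥ 2, and set d̃ = d^{N−1} − d + 1. Then { i_1·d̃ + ∑_{k=2}^N i_k·d^{N−k} : i_1, i_2, …, i_N ∈ {0,…,d−1} } = {0, 1, …, d^N − (d−1)² − 1}; in particular this set has exactly d^N − (d−1)² elements. -/

import Mathlib

lemma digitsum (d : ℕ) (m : ℕ) : ∀ L, ∑ j ∈ Finset.range L, (m / d ^ j % d) * d ^ j = m % d ^ L := by
  intro L
  induction L with
  | zero => simp [Nat.mod_one]
  | succ L ih =>
    rw [Finset.sum_range_succ, ih, pow_succ, Nat.mod_mul]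
    ring

lemma sumbound (d : ℕ) (f : ℕ → ℕ) : ∀ L, (∀ j < L, f j < d) →
    ∑ j ∈ Finset.range L, f j * d ^ j < d ^ L := by
  intro L
  induction L with
  | zero => simp
  | succ L ih =>
    intro hf
    rw [Finset.sum_range_succ, pow_succ]
    have h1 : ∑ j ∈ Finset.range L, f j * d ^ j < d ^ L := ih fun j hj => hf j (by omega)
    have h2 : f L * d ^ L ≤ (d - 1) * d ^ L := Nat.mul_le_mul_right _ (by have := hf L (by omega); omega)
    have h3 : d ^ L + (d - 1) * d ^ L = d ^ L * d := by
      have hd : 1 ≤ d := by have := hf L (by omega); omega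
      have : d ^ L * 1 + (d - 1) * d ^ L = d ^ L * d := by
        rw [mul_comm (d-1), ← Nat.mul_add]
        congr 1
        omega
      simpa using this
    omega

lemma reindex (N : ℕ) (hN : 2 ≤ N) (F : ℕ → ℕ) :
    ∑ k ∈ Finset.Icc 2 N, F (N - k) = ∑ j ∈ Finset.range (N - 1), F j := by
  apply Finset.sum_nbij' (fun k => N - k) (fun j => N - j)
  · intro k hk; simp only [Finset.mem_Icc] at hk; simp only [Finset.mem_range]; omega
  · intro j hj; simp only [Finset.mem_range] at hj; simp only [Finset.mem_Icc]; omega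
  · intro k hk; simp only [Finset.mem_Icc] at hk; omega
  · intro j hj; simp only [Finset.mem_range] at hj; omega
  · intro k hk; rfl

theorem stmt12 (d N : ℕ) (hd : 2 ≤ d) (hN : 2 ≤ N) :
    {n : ℕ | ∃ i : ℕ → ℕ, (∀ k ∈ Finset.Icc 1 N, i k < d) ∧
        n = i 1 * (d ^ (N - 1) - d + 1) + ∑ k ∈ Finset.Icc 2 N, i k * d ^ (N - k)}
      = Set.Iio (d ^ N - (d - 1) ^ 2) ∧
    Set.ncard {n : ℕ | ∃ i : ℕ → ℕ, (∀ k ∈ Finset.Icc 1 N, i k < d) ∧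
        n = i 1 * (d ^ (N - 1) - d + 1) + ∑ k ∈ Finset.Icc 2 N, i k * d ^ (N - k)}
      = d ^ N - (d - 1) ^ 2 := by
  have hdD : d ≤ d ^ (N - 1) := by
    calc d = d ^ 1 := (pow_one d).symm
    _ ≤ d ^ (N - 1) := Nat.pow_le_pow_right (by omega) (by omega)
  set D := d ^ (N - 1) with hDdef
  set t := D - d + 1 with htdef
  have hdN : d ^ N = d * D := by
    rw [hDdef, ← pow_succ']
    congr 1
    omega
  have ht1 : 1 ≤ t := by omega
  have htD : t ≤ D := by omega
  have key : (d - 1) * t + D + (d - 1) ^ 2 = d * D := by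
    have h1 : 1 ≤ d := by omega
    zify [hdD, h1, htdef]
    ring
  have hset : {n : ℕ | ∃ i : ℕ → ℕ, (∀ k ∈ Finset.Icc 1 N, i k < d) ∧
        n = i 1 * t + ∑ k ∈ Finset.Icc 2 N, i k * d ^ (N - k)}
      = Set.Iio (d ^ N - (d - 1) ^ 2) := by
    ext n
    simp only [Set.mem_setOf_eq, Set.mem_Iio]
    constructor
    · rintro ⟨i, hi, rfl⟩
      have hsum : ∑ k ∈ Finset.Icc 2 N, i k * d ^ (N - k)
          = ∑ j ∈ Finset.range (N - 1), i (N - j) * d ^ j := by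
        rw [← reindex N hN (fun j => i (N - j) * d ^ j)]
        apply Finset.sum_congr rfl
        intro k hk
        simp only [Finset.mem_Icc] at hk
        congr 2 <;> omega
      have hS : ∑ k ∈ Finset.Icc 2 N, i k * d ^ (N - k) < D := by
        rw [hsum, hDdef]
        apply sumbound
        intro j hj
        apply hi
        simp only [Finset.mem_Icc]
        omega
      have h1 : i 1 * t ≤ (d - 1) * t := by
        apply Nat.mul_le_mul_right
        have := hi 1 (by simp [Finset.mem_Icc]; omega)
        omega
      rw [hdN, Nat.lt_sub_iff_add_lt]
      linarith [key, h1, hS]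
    · intro hn
      rw [hdN, Nat.lt_sub_iff_add_lt] at hn
      -- choose a, m with a < d, m < D, n = a * t + m
      obtain ⟨a, m, ha, hm, hnm⟩ : ∃ a m, a < d ∧ m < D ∧ n = a * t + m := by
        by_cases hc : n / t ≤ d - 1
        · refine ⟨n / t, n % t, by omega, ?_, ?_⟩
          · have := Nat.mod_lt n (show 0 < t by omega)
            omega
          · rw [Nat.mul_comm]
            exact (Nat.div_add_mod n t).symm
        · have hdt : d * t ≤ n := by
            rw [← Nat.le_div_iff_mul_le (by omega)]
            omega
          have hle : (d - 1) * t ≤ n :=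
            le_trans (Nat.mul_le_mul_right t (by omega : d - 1 ≤ d)) hdt
          refine ⟨d - 1, n - (d - 1) * t, by omega, ?_, ?_⟩
          · rw [Nat.sub_lt_iff_lt_add hle]
            linarith [key, hn]
          · omega
      refine ⟨fun k => if k = 1 then a else m / d ^ (N - k) % d, ?_, ?_⟩
      · intro k hk
        by_cases h1 : k = 1
        · simpa [h1] using ha
        · simp only [if_neg h1]
          exact Nat.mod_lt _ (by omega)
      · have hc : ∀ k ∈ Finset.Icc 2 N,
            (if k = 1 then a else m / d ^ (N - k) % d) * d ^ (N - k)
              = m / d ^ (N - k) % d * d ^ (N - k) := by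
          intro k hk
          simp only [Finset.mem_Icc] at hk
          rw [if_neg (by omega)]
        have hre := (reindex N hN (fun j => m / d ^ j % d * d ^ j)).symm
        show n = (if (1:ℕ) = 1 then a else m / d ^ (N - 1) % d) * t + _
        rw [Finset.sum_congr rfl hc, if_pos rfl, ← hre, digitsum,
          Nat.mod_eq_of_lt (show m < d ^ (N - 1) from hm), hnm]
  exact ⟨hset, by rw [hset, ← Finset.coe_Iio, Set.ncard_coe_finset, Nat.card_Iio]⟩
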